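/- Let f : Fin m → Fin a and g : Fin m → Fin b be monotone surjective functions. Then there exists exactly one triple (n, p₀, p₁) with n : ℕ and p₀ : Fin a → Fin n, p₁ : Fin b → Fin n monotone surjective, such that p₀ ∘ f = p₁ ∘ g and the square is a pushout in sLin, i.e. for every k : ℕ and monotone surjective q₀ : Fin a → Fin k, q₁ : Fin b → Fin k with q₀ ∘ f = q₁ ∘ g there exists a unique monotone surjective h : Fin n → Fin k with h ∘ p₀ = q₀ and h ∘ p₁ = q₁. (sLin has strict pushouts.) -/

import Mathlib

/-- A commuting square `p₀ ∘ f = p₁ ∘ g` of monotone surjections is a pushout in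
`sLin` (the category of finite linear orders `Fin n` and monotone surjections). -/
def SLinPushout {m a b n : ℕ} (f : Fin m → Fin a) (g : Fin m → Fin b)
    (p₀ : Fin a → Fin n) (p₁ : Fin b → Fin n) : Prop :=
  ∀ (k : ℕ) (q₀ : Fin a → Fin k) (q₁ : Fin b → Fin k),
    Monotone q₀ → Function.Surjective q₀ → Monotone q₁ → Function.Surjective q₁ →
    q₀ ∘ f = q₁ ∘ g →
    ∃! h : Fin n → Fin k,
      (Monotone h ∧ Function.Surjective h) ∧ h ∘ p₀ = q₀ ∧ h ∘ p₁ = q₁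

namespace SLinAux

lemma nat_chain {α : Sort*} (u : ℕ → α) {x y : ℕ} (h : x ≤ y)
    (step : ∀ j, x ≤ j → j < y → u j = u (j + 1)) : u x = u y := by
  induction y, h using Nat.le_induction with
  | base => rfl
  | succ y hy ih =>
    rw [ih (fun j hj hj' => step j hj (by omega)), step y hy (by omega)]

lemma factor {m n k : ℕ} {p : Fin m → Fin n} {q : Fin m → Fin k}
    (hpm : Monotone p) (hps : Function.Surjective p)
    (hqm : Monotone q) (hqs : Function.Surjective q)
    (hconst : ∀ x y, p x = p y → q x = q y) :
    ∃ h : Fin n → Fin k, Monotone h ∧ Function.Surjective h ∧ h ∘ p = q := by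
  choose s hs using hps
  have key : ∀ x y, p x ≤ p y → q x ≤ q y := by
    intro x y hxy
    rcases eq_or_lt_of_le hxy with h | h
    · exact (hconst x y h).le
    · have hlt : x < y := by
        by_contra hc
        push_neg at hc
        exact absurd (hpm hc) (not_le_of_gt h)
      exact hqm hlt.le
  refine ⟨q ∘ s, ?_, ?_, ?_⟩
  · intro i j hij
    exact key _ _ (by rw [hs i, hs j]; exact hij)
  · intro t
    obtain ⟨x, hx⟩ := hqs t
    exact ⟨p x, by
      simp only [Function.comp_apply]
      rw [hconst (s (p x)) x (hs (p x)), hx]⟩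
  · funext x
    exact hconst (s (p x)) x (hs (p x))

lemma le_apply_of_strictMono {n : ℕ} {u : Fin n → Fin n} (hu : StrictMono u) :
    ∀ i : Fin n, i ≤ u i := by
  rcases n with _ | n
  · exact fun i => i.elim0
  intro i
  induction i using Fin.induction with
  | zero => exact Fin.zero_le _
  | succ i ih =>
    have h1 := hu (Fin.castSucc_lt_succ : Fin.castSucc i < Fin.succ i)
    simp only [Fin.le_def, Fin.lt_def, Fin.coe_castSucc, Fin.val_succ] at *
    omega

lemma exists_pushout {m a b : ℕ} (f : Fin m → Fin a) (g : Fin m → Fin b)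
    (hfm : Monotone f) (hfs : Function.Surjective f)
    (hgm : Monotone g) (hgs : Function.Surjective g) :
    ∃ (n : ℕ) (p₀ : Fin a → Fin n) (p₁ : Fin b → Fin n),
      Monotone p₀ ∧ Function.Surjective p₀ ∧ Monotone p₁ ∧ Function.Surjective p₁ ∧
      p₀ ∘ f = p₁ ∘ g ∧ SLinPushout f g p₀ p₁ := by
  rcases m with _ | m'
  · -- degenerate case : everything is empty
    have ha : ∀ i : Fin a, False := fun i => (hfs i).choose.elim0
    have hb : ∀ i : Fin b, False := fun i => (hgs i).choose.elim0
    refine ⟨0, fun i => (ha i).elim, fun i => (hb i).elim, ?_, ?_, ?_, ?_, ?_, ?_⟩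
    · intro x _ _; exact (ha x).elim
    · intro t; exact t.elim0
    · intro x _ _; exact (hb x).elim
    · intro t; exact t.elim0
    · funext x; exact x.elim0
    · intro k q₀ q₁ _ hq₀s _ _ _
      have hk : ∀ t : Fin k, False := fun t => ha (hq₀s t).choose
      refine ⟨fun x => x.elim0, ⟨⟨?_, ?_⟩, ?_, ?_⟩, ?_⟩
      · intro x _ _; exact x.elim0
      · intro t; exact (hk t).elim
      · funext i; exact (ha i).elim
      · funext i; exact (hb i).elim
      · intro h' _; funext x; exact x.elim0
  · -- main case
    set d : ℕ → ℕ := fun j =>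
      if h : j < m' then
        (if f ⟨j, by omega⟩ < f ⟨j + 1, by omega⟩ ∧
            g ⟨j, by omega⟩ < g ⟨j + 1, by omega⟩ then 1 else 0)
      else 0 with hd_def
    set c : ℕ → ℕ := fun j => ∑ i ∈ Finset.range j, d i with hc_def
    have hstep : ∀ j, c (j + 1) = c j + d j := fun j => Finset.sum_range_succ d j
    have hd1 : ∀ j, d j ≤ 1 := by
      intro j; simp only [hd_def]; split_ifs <;> omega
    have hmono : ∀ {x y : ℕ}, x ≤ y → c x ≤ c y := by
      intro x y h
      exact Finset.sum_le_sum_of_subset (Finset.range_subset_range.2 h)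
    have hcsurj : ∀ j t, t ≤ c j → ∃ i, i ≤ j ∧ c i = t := by
      intro j
      induction j with
      | zero =>
        intro t ht
        refine ⟨0, le_refl _, ?_⟩
        simp only [hc_def, Finset.range_zero, Finset.sum_empty] at ht ⊢
        omega
      | succ j ih =>
        intro t ht
        by_cases h : t ≤ c j
        · obtain ⟨i, hi, hci⟩ := ih t h
          exact ⟨i, by omega, hci⟩
        · have h1 := hstep j
          have h2 := hd1 j
          exact ⟨j + 1, le_refl _, by omega⟩
    set n : ℕ := c m' + 1 with hn_def
    have hlt : ∀ x : Fin (m' + 1), c x.val < n := by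
      intro x
      have : c x.val ≤ c m' := hmono (Nat.lt_succ_iff.mp x.isLt)
      omega
    set p : Fin (m' + 1) → Fin n := fun x => ⟨c x.val, hlt x⟩ with hp_def
    have hp_mono : Monotone p := by
      intro x y h
      exact hmono (Fin.le_def.mp h)
    have hp_surj : Function.Surjective p := by
      intro t
      have ht : t.val ≤ c m' := by omega
      obtain ⟨i, hi, hci⟩ := hcsurj m' t.val ht
      exact ⟨⟨i, by omega⟩, Fin.ext (by simpa using hci)⟩
    -- one-sided constancy criterion for p
    have hconst_half : ∀ x y : Fin (m' + 1), x ≤ y →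
        (∀ j : ℕ, x.val ≤ j → j < y.val → d j = 0) → p x = p y := by
      intro x y hle hdz
      apply Fin.ext
      show c x.val = c y.val
      apply nat_chain c (Fin.le_def.mp hle)
      intro j hj1 hj2
      rw [hstep j, hdz j hj1 hj2]
      omega
    -- if p x = p y with x ≤ y then all gaps in between have d = 0
    have hrev : ∀ x y : Fin (m' + 1), x ≤ y → p x = p y →
        ∀ j : ℕ, x.val ≤ j → j < y.val → d j = 0 := by
      intro x y hle hpxy j hj1 hj2
      have hcxy : c x.val = c y.val := congrArg Fin.val hpxy
      have h1 : c x.val ≤ c j := hmono hj1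
      have h2 := hstep j
      have h3 : c (j + 1) ≤ c y.val := hmono (by omega)
      omega
    -- d j = 0 means f or g is flat across the gap j
    have hd_cases : ∀ (j : ℕ) (hj : j < m'), d j = 0 →
        f ⟨j, by omega⟩ = f ⟨j + 1, by omega⟩ ∨
        g ⟨j, by omega⟩ = g ⟨j + 1, by omega⟩ := by
      intro j hj hd0
      simp only [hd_def, dif_pos hj] at hd0
      split_ifs at hd0 with hcond
      rcases not_and_or.mp hcond with h | h
      · left
        exact le_antisymm (hfm (by simp [Fin.le_def])) (not_lt.mp h)
      · right
        exact le_antisymm (hgm (by simp [Fin.le_def])) (not_lt.mp h)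
    -- flatness of f (resp. g) across a gap forces d = 0
    have hd_zero_f : ∀ (j : ℕ) (hj : j < m'),
        f ⟨j, by omega⟩ = f ⟨j + 1, by omega⟩ → d j = 0 := by
      intro j hj hfj
      simp only [hd_def, dif_pos hj]
      rw [if_neg]
      rintro ⟨h1, -⟩
      exact absurd hfj (ne_of_lt h1)
    have hd_zero_g : ∀ (j : ℕ) (hj : j < m'),
        g ⟨j, by omega⟩ = g ⟨j + 1, by omega⟩ → d j = 0 := by
      intro j hj hgj
      simp only [hd_def, dif_pos hj]
      rw [if_neg]
      rintro ⟨-, h2⟩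
      exact absurd hgj (ne_of_lt h2)
    -- p is constant on fibers of f
    have key_f : ∀ x y : Fin (m' + 1), x ≤ y → f x = f y → p x = p y := by
      intro x y hle hxy
      apply hconst_half x y hle
      intro j hj1 hj2
      have hjm : j < m' := by have := y.isLt; omega
      apply hd_zero_f j hjm
      have h1 : f x ≤ f ⟨j, by omega⟩ := hfm (by simp [Fin.le_def]; omega)
      have h2 : f (⟨j, by omega⟩ : Fin (m' + 1)) ≤ f ⟨j + 1, by omega⟩ :=
        hfm (by simp [Fin.le_def])
      have h3 : f (⟨j + 1, by omega⟩ : Fin (m' + 1)) ≤ f y :=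
        hfm (by simp [Fin.le_def]; omega)
      exact le_antisymm h2 (h3.trans (hxy ▸ h1))
    have key_g : ∀ x y : Fin (m' + 1), x ≤ y → g x = g y → p x = p y := by
      intro x y hle hxy
      apply hconst_half x y hle
      intro j hj1 hj2
      have hjm : j < m' := by have := y.isLt; omega
      apply hd_zero_g j hjm
      have h1 : g x ≤ g ⟨j, by omega⟩ := hgm (by simp [Fin.le_def]; omega)
      have h2 : g (⟨j, by omega⟩ : Fin (m' + 1)) ≤ g ⟨j + 1, by omega⟩ :=
        hgm (by simp [Fin.le_def])
      have h3 : g (⟨j + 1, by omega⟩ : Fin (m' + 1)) ≤ g y :=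
        hgm (by simp [Fin.le_def]; omega)
      exact le_antisymm h2 (h3.trans (hxy ▸ h1))
    have hconst_f : ∀ x y, f x = f y → p x = p y := by
      intro x y h
      rcases le_total x y with hle | hle
      · exact key_f x y hle h
      · exact (key_f y x hle h.symm).symm
    have hconst_g : ∀ x y, g x = g y → p x = p y := by
      intro x y h
      rcases le_total x y with hle | hle
      · exact key_g x y hle h
      · exact (key_g y x hle h.symm).symm
    -- factor p through f and through g
    obtain ⟨p₀, hp₀m, hp₀s, hp₀f⟩ := factor hfm hfs hp_mono hp_surj hconst_f
    obtain ⟨p₁, hp₁m, hp₁s, hp₁g⟩ := factor hgm hgs hp_mono hp_surj hconst_g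
    refine ⟨n, p₀, p₁, hp₀m, hp₀s, hp₁m, hp₁s, by rw [hp₀f, hp₁g], ?_⟩
    -- the universal property
    intro k q₀ q₁ hq₀m hq₀s hq₁m hq₁s hcomm
    have hq12 : ∀ x, q₀ (f x) = q₁ (g x) := fun x => congrFun hcomm x
    set q : Fin (m' + 1) → Fin k := q₀ ∘ f with hq_def
    have hq_mono : Monotone q := hq₀m.comp hfm
    have hq_surj : Function.Surjective q := hq₀s.comp hfs
    -- q is constant on fibers of p
    have hq_flat : ∀ (j : ℕ) (hj : j < m'), d j = 0 →
        q ⟨j, by omega⟩ = q ⟨j + 1, by omega⟩ := by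
      intro j hj hd0
      rcases hd_cases j hj hd0 with h | h
      · show q₀ (f _) = q₀ (f _)
        rw [h]
      · show q₀ (f _) = q₀ (f _)
        simp only [hq12]
        rw [h]
    have hq_const_half : ∀ x y : Fin (m' + 1), x ≤ y → p x = p y → q x = q y := by
      intro x y hle hpxy
      have hd0 := hrev x y hle hpxy
      set u : ℕ → Fin k := fun j => q ⟨min j m', Nat.lt_succ_of_le (min_le_right j m')⟩
        with hu_def
      have hu_eq : ∀ (j : ℕ) (h : j ≤ m'),
          u j = q ⟨j, Nat.lt_succ_of_le h⟩ := by
        intro j h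
        exact congrArg q (Fin.ext (Nat.min_eq_left h))
      have hux : u x.val = q x := by
        rw [hu_eq x.val (by omega)]
      have huy : u y.val = q y := by
        rw [hu_eq y.val (by omega)]
      have hchain : u x.val = u y.val := by
        apply nat_chain u (Fin.le_def.mp hle)
        intro j hj1 hj2
        have hjm : j < m' := by have := y.isLt; omega
        rw [hu_eq j (by omega), hu_eq (j + 1) (by omega)]
        exact hq_flat j hjm (hd0 j hj1 hj2)
      rw [← hux, ← huy, hchain]
    have hq_const : ∀ x y, p x = p y → q x = q y := by
      intro x y h
      rcases le_total x y with hle | hle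
      · exact hq_const_half x y hle h
      · exact (hq_const_half y x hle h.symm).symm
    obtain ⟨h, hhm, hhs, hhp⟩ := factor hp_mono hp_surj hq_mono hq_surj hq_const
    have hh0 : h ∘ p₀ = q₀ := by
      funext i
      obtain ⟨x, rfl⟩ := hfs i
      have : (h ∘ p₀) (f x) = (h ∘ p) x := by
        simp only [Function.comp_apply]
        rw [← congrFun hp₀f x]
        rfl
      rw [this, hhp]
      rfl
    have hh1 : h ∘ p₁ = q₁ := by
      funext i
      obtain ⟨x, rfl⟩ := hgs i
      have : (h ∘ p₁) (g x) = (h ∘ p) x := by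
        simp only [Function.comp_apply]
        rw [← congrFun hp₁g x]
        rfl
      rw [this, hhp]
      exact congrFun hcomm x
    refine ⟨h, ⟨⟨hhm, hhs⟩, hh0, hh1⟩, ?_⟩
    intro h' ⟨_, hh'0, _⟩
    funext t
    obtain ⟨x, rfl⟩ := hp_surj t
    have e1 : p x = p₀ (f x) := (congrFun hp₀f x).symm
    calc h' (p x) = h' (p₀ (f x)) := by rw [← e1]
      _ = q₀ (f x) := congrFun hh'0 (f x)
      _ = h (p₀ (f x)) := (congrFun hh0 (f x)).symm
      _ = h (p x) := by rw [← e1]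

end SLinAux

/-- `sLin` has strict pushouts: every span of monotone surjections has
exactly one pushout cocone. -/
theorem slin_has_strict_pushouts {m a b : ℕ}
    (f : Fin m → Fin a) (g : Fin m → Fin b)
    (hfm : Monotone f) (hfs : Function.Surjective f)
    (hgm : Monotone g) (hgs : Function.Surjective g) :
    ∃! t : Σ n : ℕ, (Fin a → Fin n) × (Fin b → Fin n),
      Monotone t.2.1 ∧ Function.Surjective t.2.1 ∧
      Monotone t.2.2 ∧ Function.Surjective t.2.2 ∧
      t.2.1 ∘ f = t.2.2 ∘ g ∧ SLinPushout f g t.2.1 t.2.2 := by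
  obtain ⟨n, p₀, p₁, hp₀m, hp₀s, hp₁m, hp₁s, hcomm, hpush⟩ :=
    SLinAux.exists_pushout f g hfm hfs hgm hgs
  refine ⟨⟨n, p₀, p₁⟩, ⟨hp₀m, hp₀s, hp₁m, hp₁s, hcomm, hpush⟩, ?_⟩
  rintro ⟨n', p₀', p₁'⟩ ⟨hp₀'m, hp₀'s, hp₁'m, hp₁'s, hcomm', hpush'⟩
  -- mediating maps in both directions
  obtain ⟨h, ⟨⟨hhm, hhs⟩, hh0, hh1⟩, hhu⟩ :=
    hpush n' p₀' p₁' hp₀'m hp₀'s hp₁'m hp₁'s hcomm'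
  obtain ⟨h', ⟨⟨hh'm, hh's⟩, hh'0, hh'1⟩, hh'u⟩ :=
    hpush' n p₀ p₁ hp₀m hp₀s hp₁m hp₁s hcomm
  -- h' ∘ h = id
  obtain ⟨w, hw, hwu⟩ := hpush n p₀ p₁ hp₀m hp₀s hp₁m hp₁s hcomm
  have hid1 : h' ∘ h = id := by
    have e1 : h' ∘ h = w := by
      apply hwu
      refine ⟨⟨hh'm.comp hhm, hh's.comp hhs⟩, ?_, ?_⟩
      · rw [Function.comp_assoc, hh0, hh'0]
      · rw [Function.comp_assoc, hh1, hh'1]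
    have e2 : (id : Fin n → Fin n) = w := by
      apply hwu
      exact ⟨⟨monotone_id, Function.surjective_id⟩, by simp, by simp⟩
    rw [e1, e2]
  obtain ⟨w', hw', hw'u⟩ := hpush' n' p₀' p₁' hp₀'m hp₀'s hp₁'m hp₁'s hcomm'
  have hid2 : h ∘ h' = id := by
    have e1 : h ∘ h' = w' := by
      apply hw'u
      refine ⟨⟨hhm.comp hh'm, hhs.comp hh's⟩, ?_, ?_⟩
      · rw [Function.comp_assoc, hh'0, hh0]
      · rw [Function.comp_assoc, hh'1, hh1]
    have e2 : (id : Fin n' → Fin n') = w' := by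
      apply hw'u
      exact ⟨⟨monotone_id, Function.surjective_id⟩, by simp, by simp⟩
    rw [e1, e2]
  -- n = n'
  have hcard1 : n' ≤ n := by
    have := Fintype.card_le_of_surjective h hhs
    simpa using this
  have hcard2 : n ≤ n' := by
    have := Fintype.card_le_of_surjective h' hh's
    simpa using this
  have hnn : n' = n := le_antisymm hcard1 hcard2
  subst hnn
  -- h = id
  have hinj : Function.Injective h :=
    Function.LeftInverse.injective (g := h') (fun x => congrFun hid1 x)
  have hinj' : Function.Injective h' :=
    Function.LeftInverse.injective (g := h) (fun x => congrFun hid2 x)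
  have hsm : StrictMono h := hhm.strictMono_of_injective hinj
  have hsm' : StrictMono h' := hh'm.strictMono_of_injective hinj'
  have hid : h = id := by
    funext i
    have l1 : i ≤ h i := SLinAux.le_apply_of_strictMono hsm i
    have l2 : h i ≤ h' (h i) := SLinAux.le_apply_of_strictMono hsm' (h i)
    have l3 : h' (h i) = i := congrFun hid1 i
    exact le_antisymm (l2.trans (le_of_eq l3)) l1
  rw [hid] at hh0 hh1
  simp only [Function.id_comp] at hh0 hh1
  rw [← hh0, ← hh1]
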